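/- Let ⊗ be a continuous t-norm with residuum ⇒. Consider fuzzy ALC semantics in which ⊓ and ∃ are interpreted via ⊗, ∀ and concept inclusion via ⇒, and ⊔ and ¬ via arbitrary fixed functions e : [0,1]² → [0,1] and n : [0,1] → [0,1]. Let K be a fuzzy knowledge base, C and D concepts, and A an atomic concept occurring neither in K nor in C nor in D. Then K ∪ {⟨C ⊑ D ≥ 1⟩} is satisfiable iff K ∪ {⟨C ⊑ A ⊓ D ≥ 1⟩, ⟨A ⊓ D ⊑ C ≥ 1⟩} is satisfiable; moreover the same equivalence holds for satisfiability in interpretations with finite domain. -/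

import Mathlib

/-- ALC concepts over countably many atomic concepts and role names. -/
inductive GConcept : Type where
  | atom : ℕ → GConcept
  | top  : GConcept
  | bot  : GConcept
  | conj : GConcept → GConcept → GConcept
  | disj : GConcept → GConcept → GConcept
  | neg  : GConcept → GConcept
  | all  : ℕ → GConcept → GConcept
  | ex   : ℕ → GConcept → GConcept
deriving DecidableEq

/-- `f` is a continuous t-norm (on `[0,1]`, coded as a function on `ℝ`). -/
def IsContinuousTnorm (f : ℝ → ℝ → ℝ) : Prop :=
  (∀ x ∈ Set.Icc (0:ℝ) 1, ∀ y ∈ Set.Icc (0:ℝ) 1, f x y ∈ Set.Icc (0:ℝ) 1) ∧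
  (∀ x ∈ Set.Icc (0:ℝ) 1, ∀ y ∈ Set.Icc (0:ℝ) 1, f x y = f y x) ∧
  (∀ x ∈ Set.Icc (0:ℝ) 1, ∀ y ∈ Set.Icc (0:ℝ) 1, ∀ z ∈ Set.Icc (0:ℝ) 1,
    f (f x y) z = f x (f y z)) ∧
  (∀ x ∈ Set.Icc (0:ℝ) 1, ∀ x' ∈ Set.Icc (0:ℝ) 1, ∀ y ∈ Set.Icc (0:ℝ) 1,
    ∀ y' ∈ Set.Icc (0:ℝ) 1, x ≤ x' → y ≤ y' → f x y ≤ f x' y') ∧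
  (∀ x ∈ Set.Icc (0:ℝ) 1, f x 1 = x) ∧
  ContinuousOn (fun p : ℝ × ℝ => f p.1 p.2) (Set.Icc (0:ℝ) 1 ×ˢ Set.Icc (0:ℝ) 1)

/-- The residuum `x ⇒ y = sup {z ∈ [0,1] : f x z ≤ y}` of `f`. -/
noncomputable def res (f : ℝ → ℝ → ℝ) (x y : ℝ) : ℝ :=
  sSup {z ∈ Set.Icc (0:ℝ) 1 | f x z ≤ y}

/-- A fuzzy interpretation. -/
structure Interp : Type 1 where
  Δ : Type
  nonempty : Nonempty Δ
  atom : ℕ → Δ → ℝ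
  role : ℕ → Δ → Δ → ℝ
  ind : ℕ → Δ
  atom_mem : ∀ i x, atom i x ∈ Set.Icc (0:ℝ) 1
  role_mem : ∀ j x y, role j x y ∈ Set.Icc (0:ℝ) 1

/-- Value of a concept at a point, where `⊓`/`∃` are interpreted via the t-norm `f`,
`∀` via the residuum of `f`, `⊔` via `e` and `¬` via `n`. -/
noncomputable def gval (f e : ℝ → ℝ → ℝ) (n : ℝ → ℝ) (I : Interp) :
    GConcept → I.Δ → ℝ
  | GConcept.atom i, x => I.atom i x
  | GConcept.top, _ => 1
  | GConcept.bot, _ => 0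
  | GConcept.conj C D, x => f (gval f e n I C x) (gval f e n I D x)
  | GConcept.disj C D, x => e (gval f e n I C x) (gval f e n I D x)
  | GConcept.neg C, x => n (gval f e n I C x)
  | GConcept.all j C, x => ⨅ y, res f (I.role j x y) (gval f e n I C y)
  | GConcept.ex j C, x => ⨆ y, f (I.role j x y) (gval f e n I C y)

/-- Degree of subsumption `(C ⊑ D)^I`. -/
noncomputable def gsub (f e : ℝ → ℝ → ℝ) (n : ℝ → ℝ) (I : Interp) (C D : GConcept) : ℝ :=
  ⨅ x, res f (gval f e n I C x) (gval f e n I D x)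

/-- Axioms of fuzzy knowledge bases. -/
inductive KAxiom : Type where
  | assertGE : ℕ → GConcept → ℚ → KAxiom
  | assertLE : ℕ → GConcept → ℚ → KAxiom
  | roleGE : ℕ → ℕ → ℕ → ℚ → KAxiom
  | gci : GConcept → GConcept → ℚ → KAxiom
deriving DecidableEq

/-- The rational constant of an axiom lies in `[0,1]`. -/
def axBounded : KAxiom → Prop
  | KAxiom.assertGE _ _ q => 0 ≤ q ∧ q ≤ 1
  | KAxiom.assertLE _ _ q => 0 ≤ q ∧ q ≤ 1
  | KAxiom.roleGE _ _ _ q => 0 ≤ q ∧ q ≤ 1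
  | KAxiom.gci _ _ q => 0 ≤ q ∧ q ≤ 1

/-- Satisfaction of an axiom in an interpretation. -/
def gsat (f e : ℝ → ℝ → ℝ) (n : ℝ → ℝ) (I : Interp) : KAxiom → Prop
  | KAxiom.assertGE a C q => (q : ℝ) ≤ gval f e n I C (I.ind a)
  | KAxiom.assertLE a C q => gval f e n I C (I.ind a) ≤ (q : ℝ)
  | KAxiom.roleGE a b j q => (q : ℝ) ≤ I.role j (I.ind a) (I.ind b)
  | KAxiom.gci C D q => (q : ℝ) ≤ gsub f e n I C D

/-- Satisfaction of a set of axioms. -/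
def gsatKB (f e : ℝ → ℝ → ℝ) (n : ℝ → ℝ) (I : Interp) (K : Finset KAxiom) : Prop :=
  ∀ ax ∈ K, gsat f e n I ax

/-- Witnessed interpretation: all the relevant infima and suprema are attained. -/
def gWitnessed (f e : ℝ → ℝ → ℝ) (n : ℝ → ℝ) (I : Interp) : Prop :=
  ∀ (C D : GConcept) (j : ℕ) (x : I.Δ),
    (∃ y, gval f e n I (GConcept.ex j C) x = f (I.role j x y) (gval f e n I C y)) ∧
    (∃ y, gval f e n I (GConcept.all j C) x = res f (I.role j x y) (gval f e n I C y)) ∧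
    (∃ y, gsub f e n I C D = res f (gval f e n I C y) (gval f e n I D y))

/-- The atomic concept `A_i` occurs in a concept. -/
def occursC (i : ℕ) : GConcept → Prop
  | GConcept.atom i' => i = i'
  | GConcept.top => False
  | GConcept.bot => False
  | GConcept.conj C D => occursC i C ∨ occursC i D
  | GConcept.disj C D => occursC i C ∨ occursC i D
  | GConcept.neg C => occursC i C
  | GConcept.all _ C => occursC i C
  | GConcept.ex _ C => occursC i C

/-- The atomic concept `A_i` occurs in an axiom. -/
def occursA (i : ℕ) : KAxiom → Prop
  | KAxiom.assertGE _ C _ => occursC i C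
  | KAxiom.assertLE _ C _ => occursC i C
  | KAxiom.roleGE _ _ _ _ => False
  | KAxiom.gci C D _ => occursC i C ∨ occursC i D

section AuxLemmas

variable {f e : ℝ → ℝ → ℝ} {n : ℝ → ℝ}

lemma h01 : (0:ℝ) ∈ Set.Icc (0:ℝ) 1 := ⟨le_rfl, zero_le_one⟩
lemma h11 : (1:ℝ) ∈ Set.Icc (0:ℝ) 1 := ⟨zero_le_one, le_rfl⟩

lemma tn_zero (hf : IsContinuousTnorm f) {x : ℝ} (hx : x ∈ Set.Icc (0:ℝ) 1) :
    f x 0 = 0 := by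
  obtain ⟨hr, hc, -, hm, hone, -⟩ := hf
  have hle : f x 0 ≤ f 1 0 := hm x hx 1 h11 0 h01 0 h01 hx.2 le_rfl
  have h10 : f 1 0 = 0 := by rw [hc 1 h11 0 h01, hone 0 h01]
  rw [h10] at hle
  exact le_antisymm hle (hr x hx 0 h01).1

lemma resSet_bddAbove (f : ℝ → ℝ → ℝ) (x y : ℝ) :
    BddAbove {z ∈ Set.Icc (0:ℝ) 1 | f x z ≤ y} :=
  ⟨1, fun _ hz => hz.1.2⟩

lemma res_mem (f : ℝ → ℝ → ℝ) (x y : ℝ) : res f x y ∈ Set.Icc (0:ℝ) 1 :=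
  ⟨Real.sSup_nonneg fun _ hz => hz.1.1, Real.sSup_le (fun _ hz => hz.1.2) zero_le_one⟩

lemma res_mem_set (hf : IsContinuousTnorm f) {x y : ℝ} (hx : x ∈ Set.Icc (0:ℝ) 1)
    (hy : 0 ≤ y) : res f x y ∈ {z ∈ Set.Icc (0:ℝ) 1 | f x z ≤ y} := by
  obtain ⟨hr, hc, ha, hm, hone, hcont⟩ := hf
  have hne : ({z ∈ Set.Icc (0:ℝ) 1 | f x z ≤ y}).Nonempty :=
    ⟨0, h01, by rw [tn_zero ⟨hr, hc, ha, hm, hone, hcont⟩ hx]; exact hy⟩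
  have hg : ContinuousOn (fun z : ℝ => f x z) (Set.Icc (0:ℝ) 1) := by
    have : ContinuousOn (fun z : ℝ => ((x, z) : ℝ × ℝ)) (Set.Icc (0:ℝ) 1) :=
      (continuous_const.prodMk continuous_id).continuousOn
    exact hcont.comp this (fun z hz => Set.mk_mem_prod hx hz)
  have hcl : IsClosed {z ∈ Set.Icc (0:ℝ) 1 | f x z ≤ y} := by
    have h1 := hg.preimage_isClosed_of_isClosed isClosed_Icc (isClosed_Iic (a := y))
    have h2 : {z ∈ Set.Icc (0:ℝ) 1 | f x z ≤ y}
        = Set.Icc (0:ℝ) 1 ∩ (fun z : ℝ => f x z) ⁻¹' Set.Iic y := rfl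
    rw [h2]; exact h1
  exact (isLUB_csSup hne (resSet_bddAbove f x y)).mem_of_isClosed hne hcl

lemma res_eq_one (hf : IsContinuousTnorm f) {x y : ℝ} (hx : x ∈ Set.Icc (0:ℝ) 1)
    (hxy : x ≤ y) : res f x y = 1 := by
  refine le_antisymm (res_mem f x y).2 ?_
  refine le_csSup (resSet_bddAbove f x y) ⟨h11, ?_⟩
  rw [hf.2.2.2.2.1 x hx]; exact hxy

lemma le_of_one_le_res (hf : IsContinuousTnorm f) {x y : ℝ} (hx : x ∈ Set.Icc (0:ℝ) 1)
    (hy : 0 ≤ y) (h : 1 ≤ res f x y) : x ≤ y := by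
  have hm := res_mem_set hf hx hy
  have heq : res f x y = 1 := le_antisymm (res_mem f x y).2 h
  rw [heq] at hm
  have := hm.2
  rwa [hf.2.2.2.2.1 x hx] at this

lemma tn_res (hf : IsContinuousTnorm f) {x y : ℝ} (hx : x ∈ Set.Icc (0:ℝ) 1)
    (hy : y ∈ Set.Icc (0:ℝ) 1) (hxy : y ≤ x) : f x (res f x y) = y := by
  obtain ⟨hr, hc, ha, hm, hone, hcont⟩ := hf
  have hf' : IsContinuousTnorm f := ⟨hr, hc, ha, hm, hone, hcont⟩
  have hms := res_mem_set hf' hx hy.1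
  refine le_antisymm hms.2 ?_
  have hg : ContinuousOn (fun z : ℝ => f x z) (Set.Icc (0:ℝ) 1) := by
    have : ContinuousOn (fun z : ℝ => ((x, z) : ℝ × ℝ)) (Set.Icc (0:ℝ) 1) :=
      (continuous_const.prodMk continuous_id).continuousOn
    exact hcont.comp this (fun z hz => Set.mk_mem_prod hx hz)
  have hyIcc : y ∈ Set.Icc (f x 0) (f x 1) := by
    rw [tn_zero hf' hx, hone x hx]; exact ⟨hy.1, hxy⟩
  obtain ⟨z, hz, hgz⟩ := intermediate_value_Icc zero_le_one hg hyIcc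
  have hzres : z ≤ res f x y := le_csSup (resSet_bddAbove f x y) ⟨hz, hgz.le⟩
  calc y = f x z := hgz.symm
    _ ≤ f x (res f x y) := hm x hx x hx z hz _ (res_mem f x y) le_rfl hzres

lemma gval_mem (hf : IsContinuousTnorm f)
    (he : ∀ x ∈ Set.Icc (0:ℝ) 1, ∀ y ∈ Set.Icc (0:ℝ) 1, e x y ∈ Set.Icc (0:ℝ) 1)
    (hn : ∀ x ∈ Set.Icc (0:ℝ) 1, n x ∈ Set.Icc (0:ℝ) 1)
    (I : Interp) : ∀ (E : GConcept) (x : I.Δ), gval f e n I E x ∈ Set.Icc (0:ℝ) 1 := by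
  intro E
  induction E with
  | atom j => exact fun x => I.atom_mem j x
  | top => exact fun _ => h11
  | bot => exact fun _ => h01
  | conj A B ihA ihB => exact fun x => hf.1 _ (ihA x) _ (ihB x)
  | disj A B ihA ihB => exact fun x => he _ (ihA x) _ (ihB x)
  | neg A ihA => exact fun x => hn _ (ihA x)
  | all j A ihA =>
      intro x
      haveI := I.nonempty
      simp only [gval]
      have hbb : BddBelow (Set.range fun y => res f (I.role j x y) (gval f e n I A y)) := by
        refine ⟨0, ?_⟩; rintro r ⟨y, rfl⟩; exact (res_mem f _ _).1
      obtain ⟨y⟩ := I.nonempty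
      exact ⟨le_ciInf fun y => (res_mem f _ _).1,
        le_trans (ciInf_le hbb y) (res_mem f _ _).2⟩
  | ex j A ihA =>
      intro x
      simp only [gval]
      constructor
      · exact Real.iSup_nonneg fun y => (hf.1 _ (I.role_mem j x y) _ (ihA y)).1
      · exact Real.iSup_le (fun y => (hf.1 _ (I.role_mem j x y) _ (ihA y)).2) zero_le_one

lemma gsub_bddBelow (I : Interp) (A B : GConcept) :
    BddBelow (Set.range fun x => res f (gval f e n I A x) (gval f e n I B x)) := by
  refine ⟨0, ?_⟩; rintro r ⟨x, rfl⟩; exact (res_mem f _ _).1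

lemma one_le_gsub_iff (hf : IsContinuousTnorm f)
    (he : ∀ x ∈ Set.Icc (0:ℝ) 1, ∀ y ∈ Set.Icc (0:ℝ) 1, e x y ∈ Set.Icc (0:ℝ) 1)
    (hn : ∀ x ∈ Set.Icc (0:ℝ) 1, n x ∈ Set.Icc (0:ℝ) 1)
    (I : Interp) (A B : GConcept) :
    1 ≤ gsub f e n I A B ↔ ∀ x, gval f e n I A x ≤ gval f e n I B x := by
  haveI := I.nonempty
  constructor
  · intro h x
    have := le_trans h (ciInf_le (gsub_bddBelow I A B) x)
    exact le_of_one_le_res hf (gval_mem hf he hn I A x) (gval_mem hf he hn I B x).1 this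
  · intro h
    refine le_ciInf fun x => ?_
    rw [res_eq_one hf (gval_mem hf he hn I A x) (h x)]

/-- Modify the interpretation of atomic concept `i`. -/
def modifyI (I : Interp) (i : ℕ) (g : I.Δ → ℝ) (hg : ∀ x, g x ∈ Set.Icc (0:ℝ) 1) : Interp where
  Δ := I.Δ
  nonempty := I.nonempty
  atom := fun j x => if j = i then g x else I.atom j x
  role := I.role
  ind := I.ind
  atom_mem := fun j x => by split; exacts [hg x, I.atom_mem j x]
  role_mem := I.role_mem

lemma gval_modify {I : Interp} {i : ℕ} {g : I.Δ → ℝ} {hg : ∀ x, g x ∈ Set.Icc (0:ℝ) 1}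
    {E : GConcept} (hE : ¬ occursC i E) :
    ∀ x : I.Δ, gval f e n (modifyI I i g hg) E x = gval f e n I E x := by
  induction E with
  | atom j =>
      intro x
      have hne : j ≠ i := fun h => hE h.symm
      simp only [gval, modifyI, if_neg hne]
  | top => intro x; rfl
  | bot => intro x; rfl
  | conj A B ihA ihB =>
      intro x
      simp only [gval, ihA (fun h => hE (Or.inl h)) x, ihB (fun h => hE (Or.inr h)) x]
  | disj A B ihA ihB =>
      intro x
      simp only [gval, ihA (fun h => hE (Or.inl h)) x, ihB (fun h => hE (Or.inr h)) x]
  | neg A ihA =>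
      intro x
      simp only [gval, ihA hE x]
  | all j A ihA =>
      intro x
      haveI := I.nonempty
      simp only [gval]
      exact iInf_congr fun y => by rw [ihA hE y]; rfl
  | ex j A ihA =>
      intro x
      simp only [gval]
      exact iSup_congr fun y => by rw [ihA hE y]; rfl

lemma gsub_modify {I : Interp} {i : ℕ} {g : I.Δ → ℝ} {hg : ∀ x, g x ∈ Set.Icc (0:ℝ) 1}
    {A B : GConcept} (hA : ¬ occursC i A) (hB : ¬ occursC i B) :
    gsub f e n (modifyI I i g hg) A B = gsub f e n I A B :=
  iInf_congr fun x => by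
    rw [gval_modify (I := I) hA x, gval_modify (I := I) hB x]

lemma gsat_modify {I : Interp} {i : ℕ} {g : I.Δ → ℝ} {hg : ∀ x, g x ∈ Set.Icc (0:ℝ) 1}
    {ax : KAxiom} (hax : ¬ occursA i ax) :
    gsat f e n (modifyI I i g hg) ax ↔ gsat f e n I ax := by
  cases ax with
  | assertGE a E q => simp only [gsat]; rw [show gval f e n (modifyI I i g hg) E ((modifyI I i g hg).ind a) = gval f e n I E (I.ind a) from gval_modify hax _]
  | assertLE a E q => simp only [gsat]; rw [show gval f e n (modifyI I i g hg) E ((modifyI I i g hg).ind a) = gval f e n I E (I.ind a) from gval_modify hax _]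
  | roleGE a b j q => exact Iff.rfl
  | gci A B q =>
      simp only [gsat]
      rw [gsub_modify (fun h => hax (Or.inl h)) (fun h => hax (Or.inr h))]

end AuxLemmas

theorem stmt15 (f : ℝ → ℝ → ℝ) (hf : IsContinuousTnorm f)
    (e : ℝ → ℝ → ℝ) (n : ℝ → ℝ)
    (he : ∀ x ∈ Set.Icc (0:ℝ) 1, ∀ y ∈ Set.Icc (0:ℝ) 1, e x y ∈ Set.Icc (0:ℝ) 1)
    (hn : ∀ x ∈ Set.Icc (0:ℝ) 1, n x ∈ Set.Icc (0:ℝ) 1)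
    (K : Finset KAxiom) (hKb : ∀ ax ∈ K, axBounded ax)
    (C D : GConcept) (i : ℕ)
    (hK : ∀ ax ∈ K, ¬ occursA i ax) (hC : ¬ occursC i C) (hD : ¬ occursC i D) :
    ((∃ I : Interp, gsatKB f e n I (insert (KAxiom.gci C D 1) K)) ↔
     (∃ I : Interp, gsatKB f e n I
        (insert (KAxiom.gci C (GConcept.conj (GConcept.atom i) D) 1)
          (insert (KAxiom.gci (GConcept.conj (GConcept.atom i) D) C 1) K)))) ∧
    ((∃ I : Interp, Finite I.Δ ∧ gsatKB f e n I (insert (KAxiom.gci C D 1) K)) ↔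
     (∃ I : Interp, Finite I.Δ ∧ gsatKB f e n I
        (insert (KAxiom.gci C (GConcept.conj (GConcept.atom i) D) 1)
          (insert (KAxiom.gci (GConcept.conj (GConcept.atom i) D) C 1) K)))) := by
  have fwd : ∀ I : Interp, gsatKB f e n I (insert (KAxiom.gci C D 1) K) →
      gsatKB f e n
        (modifyI I i (fun x => res f (gval f e n I D x) (gval f e n I C x))
          (fun x => res_mem f _ _))
        (insert (KAxiom.gci C (GConcept.conj (GConcept.atom i) D) 1)
          (insert (KAxiom.gci (GConcept.conj (GConcept.atom i) D) C 1) K)) := by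
    intro I hsat
    have hCD : ∀ x, gval f e n I C x ≤ gval f e n I D x := by
      have h := hsat _ (Finset.mem_insert_self _ _)
      have h1 : (1:ℝ) ≤ gsub f e n I C D := by simpa [gsat] using h
      exact (one_le_gsub_iff hf he hn I C D).1 h1
    set g : I.Δ → ℝ := fun x => res f (gval f e n I D x) (gval f e n I C x) with hg
    set I' : Interp := modifyI I i g (fun x => res_mem f _ _) with hI'
    have hconj : ∀ x : I.Δ,
        gval f e n I' (GConcept.conj (GConcept.atom i) D) x = gval f e n I C x := by
      intro x
      have hstep : gval f e n I' (GConcept.conj (GConcept.atom i) D) x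
          = f (g x) (gval f e n I D x) := by
        show f (I'.atom i x) (gval f e n I' D x) = f (g x) (gval f e n I D x)
        rw [gval_modify (I := I) hD x]
        congr 1
        show (if i = i then g x else I.atom i x) = g x
        simp
      rw [hstep]
      have hDx := gval_mem hf he hn I D x
      have hCx := gval_mem hf he hn I C x
      rw [hf.2.1 (g x) (res_mem f _ _) _ hDx]
      exact tn_res hf hDx hCx (hCD x)
    intro ax hax
    rcases Finset.mem_insert.1 hax with rfl | hax
    · show ((1:ℚ):ℝ) ≤ gsub f e n I' C (GConcept.conj (GConcept.atom i) D)
      rw [Rat.cast_one, one_le_gsub_iff hf he hn]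
      intro x
      rw [gval_modify (I := I) hC x, hconj x]
    · rcases Finset.mem_insert.1 hax with rfl | hax
      · show ((1:ℚ):ℝ) ≤ gsub f e n I' (GConcept.conj (GConcept.atom i) D) C
        rw [Rat.cast_one, one_le_gsub_iff hf he hn]
        intro x
        rw [gval_modify (I := I) hC x, hconj x]
      · exact (gsat_modify (hK ax hax)).2 (hsat ax (Finset.mem_insert_of_mem hax))
  have bwd : ∀ I : Interp,
      gsatKB f e n I
        (insert (KAxiom.gci C (GConcept.conj (GConcept.atom i) D) 1)
          (insert (KAxiom.gci (GConcept.conj (GConcept.atom i) D) C 1) K)) →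
      gsatKB f e n I (insert (KAxiom.gci C D 1) K) := by
    intro I h ax hax
    rcases Finset.mem_insert.1 hax with rfl | hax
    · have h1 := h _ (Finset.mem_insert_self _ _)
      have h2 : (1:ℝ) ≤ gsub f e n I C (GConcept.conj (GConcept.atom i) D) := by
        simpa [gsat] using h1
      have h3 := (one_le_gsub_iff hf he hn I _ _).1 h2
      simp only [gsat, Rat.cast_one]
      rw [one_le_gsub_iff hf he hn]
      intro x
      refine le_trans (h3 x) ?_
      have hAx := I.atom_mem i x
      have hDx := gval_mem hf he hn I D x
      have hstep : gval f e n I (GConcept.conj (GConcept.atom i) D) x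
          = f (I.atom i x) (gval f e n I D x) := rfl
      rw [hstep]
      calc f (I.atom i x) (gval f e n I D x)
          ≤ f 1 (gval f e n I D x) :=
            hf.2.2.2.1 _ hAx 1 h11 _ hDx _ hDx hAx.2 le_rfl
        _ = gval f e n I D x := by
            rw [hf.2.1 1 h11 _ hDx, hf.2.2.2.2.1 _ hDx]
    · exact h ax (Finset.mem_insert_of_mem (Finset.mem_insert_of_mem hax))
  constructor
  · constructor
    · rintro ⟨I, hI⟩
      exact ⟨_, fwd I hI⟩
    · rintro ⟨I, hI⟩
      exact ⟨I, bwd I hI⟩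
  · constructor
    · rintro ⟨I, hfin, hI⟩
      exact ⟨modifyI I i (fun x => res f (gval f e n I D x) (gval f e n I C x))
        (fun x => res_mem f _ _), hfin, fwd I hI⟩
    · rintro ⟨I, hfin, hI⟩
      exact ⟨I, hfin, bwd I hI⟩
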